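/- Let m ≥ 1 be an integer. There exists a constant C > 0 depending only on m such that for every countable family {Q_i}_{i ∈ I} of pairwise disjoint axis-parallel cubes in ℝ^m, with t_i denoting the side length of Q_i, the function F(x) = ∑_{i ∈ I} ∫_{Q_i} t_i / (t_i + |x − z|)^{m+1} dz satisfies ‖F‖_{L²(ℝ^m)} ≤ C (∑_{i ∈ I} |Q_i|)^{1/2}, where |Q_i| denotes the Lebesgue measure of Q_i. -/

import Mathlib

open MeasureTheory

open scoped ENNReal

namespace CubePoisson

variable {m : ℕ}

noncomputable def pk (m : ℕ) (t r : ℝ) : ℝ := t / (t + r) ^ (m + 1)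

lemma pk_nonneg {t r : ℝ} (ht : 0 < t) (hr : 0 ≤ r) : 0 ≤ pk m t r :=
  div_nonneg ht.le (pow_nonneg (by linarith) _)

lemma pk_anti {t : ℝ} (ht : 0 < t) {a b : ℝ} (hab : a ≤ b) (ha : 0 ≤ a) :
    pk m t b ≤ pk m t a := by
  apply div_le_div_of_nonneg_left ht.le (pow_pos (by linarith) _)
  exact pow_le_pow_left₀ (by linarith) (by linarith) _

lemma pk_half {t r : ℝ} (ht : 0 < t) (hr : 0 ≤ r) :
    pk m t (r / 2) ≤ 2 ^ (m + 1) * pk m t r := by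
  unfold pk
  rw [mul_div_assoc', div_le_div_iff₀ (pow_pos (by linarith) _) (pow_pos (by linarith) _)]
  calc t * (t + r) ^ (m + 1) ≤ t * (2 * (t + r / 2)) ^ (m + 1) := by
        apply mul_le_mul_of_nonneg_left _ ht.le
        apply pow_le_pow_left₀ (by linarith) (by linarith)
      _ = 2 ^ (m + 1) * t * (t + r / 2) ^ (m + 1) := by rw [mul_pow]; ring

/-- Pointwise bound for the product of two Poisson profiles. -/
lemma pk_pt_bound {t s : ℝ} (ht : 0 < t) (hs : 0 < s)
    (x z w : EuclideanSpace ℝ (Fin m)) :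
    pk m t ‖x - z‖ * pk m s ‖x - w‖ ≤
      (2 ^ (m + 1) * pk m t ‖z - w‖) * pk m s ‖x - w‖ +
      (2 ^ (m + 1) * pk m s ‖z - w‖) * pk m t ‖x - z‖ := by
  set r := ‖z - w‖ with hr
  have hr0 : 0 ≤ r := norm_nonneg _
  have hb1 : (0:ℝ) ≤ (2 ^ (m + 1) * pk m t r) * pk m s ‖x - w‖ :=
    mul_nonneg (mul_nonneg (by positivity) (pk_nonneg ht hr0)) (pk_nonneg hs (norm_nonneg _))
  have hb2 : (0:ℝ) ≤ (2 ^ (m + 1) * pk m s r) * pk m t ‖x - z‖ :=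
    mul_nonneg (mul_nonneg (by positivity) (pk_nonneg hs hr0)) (pk_nonneg ht (norm_nonneg _))
  rcases le_or_gt (r / 2) ‖x - z‖ with h | h
  · have h1 : pk m t ‖x - z‖ ≤ 2 ^ (m + 1) * pk m t r :=
      (pk_anti ht h (by positivity)).trans (pk_half ht hr0)
    calc pk m t ‖x - z‖ * pk m s ‖x - w‖
        ≤ (2 ^ (m + 1) * pk m t r) * pk m s ‖x - w‖ :=
          mul_le_mul_of_nonneg_right h1 (pk_nonneg hs (norm_nonneg _))
      _ ≤ _ := le_add_of_nonneg_right hb2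
  · have htri : r ≤ ‖x - z‖ + ‖x - w‖ := by
      rw [hr]
      calc ‖z - w‖ = ‖(z - x) + (x - w)‖ := by abel_nf
        _ ≤ ‖z - x‖ + ‖x - w‖ := norm_add_le _ _
        _ = ‖x - z‖ + ‖x - w‖ := by rw [norm_sub_rev]
    have hxw : r / 2 ≤ ‖x - w‖ := by linarith
    have h1 : pk m s ‖x - w‖ ≤ 2 ^ (m + 1) * pk m s r :=
      (pk_anti hs hxw (by positivity)).trans (pk_half hs hr0)
    calc pk m t ‖x - z‖ * pk m s ‖x - w‖
        = pk m s ‖x - w‖ * pk m t ‖x - z‖ := mul_comm _ _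
      _ ≤ (2 ^ (m + 1) * pk m s r) * pk m t ‖x - z‖ :=
          mul_le_mul_of_nonneg_right h1 (pk_nonneg ht (norm_nonneg _))
      _ ≤ _ := le_add_of_nonneg_left hb1

noncomputable def cP (m : ℕ) : ℝ≥0∞ :=
  ∫⁻ y : EuclideanSpace ℝ (Fin m), ENNReal.ofReal (pk m 1 ‖y‖)

lemma cP_lt_top : cP m < ∞ := by
  have hint : Integrable (fun y : EuclideanSpace ℝ (Fin m) => (1 + ‖y‖) ^ (-((m : ℝ) + 1))) := by
    apply integrable_one_add_norm (E := EuclideanSpace ℝ (Fin m))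
    rw [finrank_euclideanSpace_fin]
    linarith
  have h := hint.2
  rw [hasFiniteIntegral_iff_norm] at h
  refine lt_of_le_of_lt (lintegral_mono fun y => ?_) h
  have h1 : (0:ℝ) < 1 + ‖y‖ := by positivity
  apply ENNReal.ofReal_le_ofReal
  rw [pk]
  rw [Real.norm_eq_abs, abs_of_nonneg (by positivity)]
  rw [Real.rpow_neg h1.le, ← Real.rpow_natCast (1 + ‖y‖) (m + 1)]
  simp [one_div]

lemma pk_smul {t r : ℝ} (ht : 0 < t) (hr : 0 ≤ r) : pk m t (t * r) = (t ^ m)⁻¹ * pk m 1 r := by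
  unfold pk
  rw [show t + t * r = t * (1 + r) by ring, mul_pow]
  rw [pow_succ t m]
  have h1 : (0:ℝ) < 1 + r := by linarith
  field_simp

lemma pk_cont_sub {X : Type*} [TopologicalSpace X] {τ : ℝ} (hτ : 0 < τ)
    {f g : X → EuclideanSpace ℝ (Fin m)} (hf : Continuous f) (hg : Continuous g) :
    Continuous fun a => pk m τ ‖f a - g a‖ := by
  unfold pk
  apply Continuous.div continuous_const
  · exact (continuous_const.add ((hf.sub hg).norm)).pow _
  · intro a
    have : (0:ℝ) < τ + ‖f a - g a‖ := by positivity
    positivity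

lemma kmeas_gen {X : Type*} [TopologicalSpace X] [MeasurableSpace X]
    [OpensMeasurableSpace X] {τ : ℝ} (hτ : 0 < τ)
    {f g : X → EuclideanSpace ℝ (Fin m)} (hf : Continuous f) (hg : Continuous g) :
    Measurable fun a => ENNReal.ofReal (pk m τ ‖f a - g a‖) :=
  ENNReal.measurable_ofReal.comp (pk_cont_sub hτ hf hg).measurable

lemma kmeas {t : ℝ} (ht : 0 < t) :
    Measurable fun p : EuclideanSpace ℝ (Fin m) × EuclideanSpace ℝ (Fin m) =>
      ENNReal.ofReal (pk m t ‖p.1 - p.2‖) :=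
  kmeas_gen ht continuous_fst continuous_snd

lemma lintegral_pk {t : ℝ} (ht : 0 < t) (w : EuclideanSpace ℝ (Fin m)) :
    ∫⁻ x : EuclideanSpace ℝ (Fin m), ENNReal.ofReal (pk m t ‖x - w‖) = cP m := by
  set f : EuclideanSpace ℝ (Fin m) → ℝ≥0∞ := fun x => ENNReal.ofReal (pk m t ‖x‖) with hf
  have htr : ∫⁻ x : EuclideanSpace ℝ (Fin m), ENNReal.ofReal (pk m t ‖x - w‖) =
      ∫⁻ x, f x := lintegral_sub_right_eq_self f w
  rw [htr]
  have hfr : Module.finrank ℝ (EuclideanSpace ℝ (Fin m)) = m := finrank_euclideanSpace_fin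
  have hmap : Measure.map (fun x : EuclideanSpace ℝ (Fin m) => t • x) volume
      = ENNReal.ofReal |(t ^ Module.finrank ℝ (EuclideanSpace ℝ (Fin m)))⁻¹| • volume :=
    Measure.map_addHaar_smul volume ht.ne'
  have key : ∫⁻ x, f (t • x) = ENNReal.ofReal ((t ^ m)⁻¹) * ∫⁻ x, f x := by
    calc ∫⁻ x, f (t • x)
        = ∫⁻ y, f y ∂(Measure.map (fun x : EuclideanSpace ℝ (Fin m) => t • x) volume) := by
          exact (lintegral_map_equiv f
            ((Homeomorph.smul (isUnit_iff_ne_zero.2 ht.ne').unit).toMeasurableEquiv)).symm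
      _ = ENNReal.ofReal ((t ^ m)⁻¹) * ∫⁻ x, f x := by
          rw [hmap, lintegral_smul_measure, hfr, abs_of_nonneg (by positivity), smul_eq_mul]
  have key2 : ∫⁻ x, f (t • x) = ENNReal.ofReal ((t ^ m)⁻¹) * cP m := by
    have : ∀ x : EuclideanSpace ℝ (Fin m),
        f (t • x) = ENNReal.ofReal ((t ^ m)⁻¹) * ENNReal.ofReal (pk m 1 ‖x‖) := by
      intro x
      rw [hf]
      simp only [norm_smul, Real.norm_eq_abs, abs_of_nonneg ht.le]
      rw [pk_smul ht (norm_nonneg x), ENNReal.ofReal_mul (by positivity)]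
    simp_rw [this]
    rw [lintegral_const_mul' _ _ ENNReal.ofReal_ne_top, cP]
  have hne : ENNReal.ofReal ((t ^ m)⁻¹) ≠ 0 := by
    simp [ENNReal.ofReal_eq_zero]
    positivity
  exact (ENNReal.mul_right_inj hne ENNReal.ofReal_ne_top).1 (key.symm.trans key2)

lemma pk_cont1' {t : ℝ} (ht : 0 < t) (z : EuclideanSpace ℝ (Fin m)) :
    Continuous fun x : EuclideanSpace ℝ (Fin m) => pk m t ‖z - x‖ :=
  pk_cont_sub ht continuous_const continuous_id

lemma kmeas1 {t : ℝ} (ht : 0 < t) (w : EuclideanSpace ℝ (Fin m)) :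
    Measurable fun x : EuclideanSpace ℝ (Fin m) => ENNReal.ofReal (pk m t ‖x - w‖) :=
  kmeas_gen ht continuous_id continuous_const

lemma kmeas1' {t : ℝ} (ht : 0 < t) (z : EuclideanSpace ℝ (Fin m)) :
    Measurable fun x : EuclideanSpace ℝ (Fin m) => ENNReal.ofReal (pk m t ‖z - x‖) :=
  kmeas_gen ht continuous_const continuous_id

/-- Kernel estimate: the convolution of two Poisson profiles. -/
lemma lintegral_pk_mul_le {t s : ℝ} (ht : 0 < t) (hs : 0 < s)
    (z w : EuclideanSpace ℝ (Fin m)) :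
    ∫⁻ x : EuclideanSpace ℝ (Fin m),
        ENNReal.ofReal (pk m t ‖x - z‖) * ENNReal.ofReal (pk m s ‖x - w‖) ≤
      2 ^ (m + 1) * cP m *
        (ENNReal.ofReal (pk m t ‖z - w‖) + ENNReal.ofReal (pk m s ‖z - w‖)) := by
  have step1 : ∫⁻ x : EuclideanSpace ℝ (Fin m),
      ENNReal.ofReal (pk m t ‖x - z‖) * ENNReal.ofReal (pk m s ‖x - w‖) ≤
      ∫⁻ x : EuclideanSpace ℝ (Fin m),
        (ENNReal.ofReal (2 ^ (m + 1) * pk m t ‖z - w‖) * ENNReal.ofReal (pk m s ‖x - w‖) +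
         ENNReal.ofReal (2 ^ (m + 1) * pk m s ‖z - w‖) * ENNReal.ofReal (pk m t ‖x - z‖)) := by
    refine lintegral_mono fun x => ?_
    dsimp only
    rw [← ENNReal.ofReal_mul (pk_nonneg ht (norm_nonneg _)),
        ← ENNReal.ofReal_mul (mul_nonneg (by positivity) (pk_nonneg ht (norm_nonneg _))),
        ← ENNReal.ofReal_mul (mul_nonneg (by positivity) (pk_nonneg hs (norm_nonneg _)))]
    refine le_trans ?_ (ENNReal.ofReal_add_le)
    exact ENNReal.ofReal_le_ofReal (pk_pt_bound ht hs x z w)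
  refine step1.trans ?_
  rw [lintegral_add_left (measurable_const.fun_mul (kmeas1 hs w)),
    lintegral_const_mul' _ _ ENNReal.ofReal_ne_top,
    lintegral_const_mul' _ _ ENNReal.ofReal_ne_top,
    lintegral_pk hs w, lintegral_pk ht z]
  rw [ENNReal.ofReal_mul (by positivity : (0:ℝ) ≤ 2 ^ (m+1)),
    ENNReal.ofReal_mul (by positivity : (0:ℝ) ≤ 2 ^ (m+1))]
  rw [ENNReal.ofReal_pow (by norm_num : (0:ℝ) ≤ 2), ENNReal.ofReal_ofNat]
  apply le_of_eq
  ring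



lemma kmeas_int {τ : ℝ} (hτ : 0 < τ) (S : Set (EuclideanSpace ℝ (Fin m))) :
    Measurable fun x : EuclideanSpace ℝ (Fin m) =>
      ∫⁻ w in S, ENNReal.ofReal (pk m τ ‖x - w‖) :=
  Measurable.lintegral_prod_right (f := fun x w => ENNReal.ofReal (pk m τ ‖x - w‖))
    (kmeas hτ)

lemma kmeas_int' {τ : ℝ} (hτ : 0 < τ) (S : Set (EuclideanSpace ℝ (Fin m))) :
    Measurable fun w : EuclideanSpace ℝ (Fin m) =>
      ∫⁻ z in S, ENNReal.ofReal (pk m τ ‖z - w‖) :=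
  Measurable.lintegral_prod_right (f := fun w z => ENNReal.ofReal (pk m τ ‖z - w‖))
    (kmeas_gen hτ continuous_snd continuous_fst)

lemma kmeas_big {τ σ : ℝ} (hτ : 0 < τ) (hσ : 0 < σ) (S : Set (EuclideanSpace ℝ (Fin m))) :
    Measurable (Function.uncurry fun x z : EuclideanSpace ℝ (Fin m) =>
      ∫⁻ w in S, ENNReal.ofReal (pk m τ ‖x - z‖) * ENNReal.ofReal (pk m σ ‖x - w‖)) :=
  Measurable.lintegral_prod_right'
    (f := fun q : (EuclideanSpace ℝ (Fin m) × EuclideanSpace ℝ (Fin m)) ×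
        EuclideanSpace ℝ (Fin m) =>
      ENNReal.ofReal (pk m τ ‖q.1.1 - q.1.2‖) * ENNReal.ofReal (pk m σ ‖q.1.1 - q.2‖))
    ((kmeas_gen hτ (continuous_fst.fst) (continuous_fst.snd)).mul
      (kmeas_gen hσ (continuous_fst.fst) continuous_snd))

lemma kmeas_big2 {τ σ : ℝ} (hτ : 0 < τ) (hσ : 0 < σ) (z : EuclideanSpace ℝ (Fin m)) :
    Measurable (Function.uncurry fun x w : EuclideanSpace ℝ (Fin m) =>
      ENNReal.ofReal (pk m τ ‖x - z‖) * ENNReal.ofReal (pk m σ ‖x - w‖)) :=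
  (kmeas_gen hτ continuous_fst continuous_const).mul
    (kmeas_gen hσ continuous_fst continuous_snd)

end CubePoisson

open CubePoisson

/-- L² estimate underlying claim (3.2) of Section 3.1: for every integer `m ≥ 1` there is
`C > 0` such that for every countable family of pairwise disjoint axis-parallel cubes
`Q i ⊂ ℝ^m` with side lengths `t i`, the function
`F x = ∑ᵢ ∫_{Q i} t i / (t i + |x - z|)^{m+1} dz` satisfies
`‖F‖_{L²(ℝ^m)} ≤ C (∑ᵢ |Q i|)^{1/2}`. -/
theorem sum_cube_poisson_L2_estimate (m : ℕ) (hm : 1 ≤ m) :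
    ∃ C > 0, ∀ (ι : Type) [Countable ι],
      ∀ (c : ι → EuclideanSpace ℝ (Fin m)) (t : ι → ℝ)
        (Q : ι → Set (EuclideanSpace ℝ (Fin m))),
        (∀ i, 0 < t i) →
        (∀ i, Q i = {z | ∀ j, z j ∈ Set.Icc (c i j) (c i j + t i)}) →
        (Pairwise fun i j => Disjoint (Q i) (Q j)) →
        eLpNorm
            (fun x : EuclideanSpace ℝ (Fin m) =>
              ∑' i, ∫ z in Q i, t i / (t i + ‖x - z‖) ^ (m + 1)) 2 volume ≤
          ENNReal.ofReal C * (∑' i, volume (Q i)) ^ (1 / 2 : ℝ) := by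
  classical
  refine ⟨((2:ℝ) ^ (m + 2) * (cP m).toReal ^ 2) ^ (1/2 : ℝ) + 1, by positivity, ?_⟩
  intro ι _ c t Q ht hQ hdisj
  set C₀ : ℝ≥0∞ := 2 ^ (m + 2) * cP m ^ 2 with hC₀def
  have hC₀top : C₀ ≠ ⊤ :=
    ENNReal.mul_ne_top (ENNReal.pow_ne_top ENNReal.ofNat_ne_top)
      (ENNReal.pow_ne_top cP_lt_top.ne)
  -- cubes are measurable
  have hQm : ∀ i, MeasurableSet (Q i) := by
    intro i
    rw [hQ i]
    have : {z : EuclideanSpace ℝ (Fin m) | ∀ j, z j ∈ Set.Icc (c i j) (c i j + t i)}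
        = ⋂ j, (fun z : EuclideanSpace ℝ (Fin m) => z j) ⁻¹' Set.Icc (c i j) (c i j + t i) := by
      ext z; simp [Set.mem_iInter]
    rw [this]
    exact MeasurableSet.iInter fun j => measurableSet_Icc.preimage
      ((measurable_pi_apply j).comp (MeasurableEquiv.toLp 2 (Fin m → ℝ)).symm.measurable)
  -- the kernels
  set k : ι → EuclideanSpace ℝ (Fin m) → EuclideanSpace ℝ (Fin m) → ℝ≥0∞ :=
    fun i x z => ENNReal.ofReal (pk m (t i) ‖x - z‖) with hk
  set A : ι → EuclideanSpace ℝ (Fin m) → ℝ≥0∞ := fun i x => ∫⁻ z in Q i, k i x z with hA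
  have hAm : ∀ i, Measurable (A i) := fun i => kmeas_int (ht i) (Q i)
  set V : ℝ≥0∞ := ∑' i, volume (Q i) with hV
  -- Step 1 : pointwise domination of the function by `∑' i, A i x`
  have hre : ∀ i (x : EuclideanSpace ℝ (Fin m)), (∫ z in Q i, pk m (t i) ‖x - z‖) = (A i x).toReal := by
    intro i x
    rw [integral_eq_lintegral_of_nonneg_ae
      (Filter.Eventually.of_forall fun z => pk_nonneg (ht i) (norm_nonneg _))
      (pk_cont1' (ht i) x).aestronglyMeasurable]
  have hpt : ∀ x : EuclideanSpace ℝ (Fin m),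
      (‖(∑' i, ∫ z in Q i, t i / (t i + ‖x - z‖) ^ (m + 1))‖₊ : ℝ≥0∞) ≤ ∑' i, A i x := by
    intro x
    have hFx : (∑' i, ∫ z in Q i, t i / (t i + ‖x - z‖) ^ (m + 1))
        = ∑' i, (A i x).toReal := by
      refine tsum_congr fun i => ?_
      exact hre i x
    rw [hFx]
    by_cases hs : Summable fun i => (A i x).toReal
    · rw [← enorm_eq_nnnorm, Real.enorm_eq_ofReal (tsum_nonneg fun i => ENNReal.toReal_nonneg)]
      rw [ENNReal.ofReal_tsum_of_nonneg (fun i => ENNReal.toReal_nonneg) hs]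
      exact ENNReal.tsum_le_tsum fun i => ENNReal.ofReal_toReal_le
    · rw [tsum_eq_zero_of_not_summable hs]
      simp
  -- covering bounds
  have hdisj' : Pairwise (Function.onFun Disjoint Q) := hdisj
  have hcov1 : ∀ (τ : ℝ), 0 < τ → ∀ z : EuclideanSpace ℝ (Fin m),
      (∑' j, ∫⁻ w in Q j, ENNReal.ofReal (pk m τ ‖z - w‖)) ≤ cP m := by
    intro τ hτ z
    rw [← lintegral_iUnion hQm hdisj']
    refine le_trans (lintegral_mono' Measure.restrict_le_self le_rfl) ?_
    have : ∀ w : EuclideanSpace ℝ (Fin m), pk m τ ‖z - w‖ = pk m τ ‖w - z‖ := fun w => by rw [norm_sub_rev]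
    simp_rw [this]
    exact (lintegral_pk hτ z).le
  have hcov2 : ∀ (τ : ℝ), 0 < τ → ∀ w : EuclideanSpace ℝ (Fin m),
      (∑' i, ∫⁻ z in Q i, ENNReal.ofReal (pk m τ ‖z - w‖)) ≤ cP m := by
    intro τ hτ w
    rw [← lintegral_iUnion hQm hdisj']
    refine le_trans (lintegral_mono' Measure.restrict_le_self le_rfl) ?_
    exact (lintegral_pk hτ w).le
  -- Step 2 : the main quadratic estimate
  have hG2 : ∫⁻ x, (∑' i, A i x) ^ 2 ≤ C₀ * V := by
    -- expand the square
    have hGsq : ∀ x : EuclideanSpace ℝ (Fin m), (∑' i, A i x) ^ 2 = ∑' i, ∑' j, A i x * A j x := by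
      intro x
      rw [sq]
      calc (∑' i, A i x) * (∑' j, A j x)
          = ∑' i, A i x * (∑' j, A j x) := ENNReal.tsum_mul_right.symm
        _ = ∑' i, ∑' j, A i x * A j x := by
            exact tsum_congr fun i => ENNReal.tsum_mul_left.symm
    have h2 : ∫⁻ x, (∑' i, A i x) ^ 2 = ∑' i, ∑' j, ∫⁻ x, A i x * A j x := by
      simp_rw [hGsq]
      rw [lintegral_tsum fun i =>
        (Measurable.ennreal_tsum fun j => (hAm i).fun_mul (hAm j)).aemeasurable]
      exact tsum_congr fun i =>
        lintegral_tsum fun j => ((hAm i).fun_mul (hAm j)).aemeasurable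
    -- rewrite each term as a triple integral
    have hAA : ∀ i j, ∫⁻ x, A i x * A j x
        = ∫⁻ z in Q i, ∫⁻ w in Q j, ∫⁻ x, k i x z * k j x w := by
      intro i j
      have e1 : ∀ x : EuclideanSpace ℝ (Fin m), A i x * A j x = ∫⁻ z in Q i, ∫⁻ w in Q j, k i x z * k j x w := by
        intro x
        calc A i x * A j x
            = ∫⁻ z in Q i, k i x z * A j x := (lintegral_mul_const _ (kmeas1' (ht i) x)).symm
          _ = ∫⁻ z in Q i, ∫⁻ w in Q j, k i x z * k j x w := by
              refine lintegral_congr fun z => ?_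
              exact (lintegral_const_mul _ (kmeas1' (ht j) x)).symm
      have hsw1 : (∫⁻ x, ∫⁻ z in Q i, ∫⁻ w in Q j, k i x z * k j x w)
          = ∫⁻ z in Q i, ∫⁻ x, ∫⁻ w in Q j, k i x z * k j x w :=
        lintegral_lintegral_swap (kmeas_big (ht i) (ht j) (Q j)).aemeasurable
      have hsw2 : ∀ z : EuclideanSpace ℝ (Fin m),
          (∫⁻ x, ∫⁻ w in Q j, k i x z * k j x w)
          = ∫⁻ w in Q j, ∫⁻ x, k i x z * k j x w :=
        fun z => lintegral_lintegral_swap (kmeas_big2 (ht i) (ht j) z).aemeasurable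
      simp_rw [e1]
      rw [hsw1]
      exact lintegral_congr fun z => hsw2 z
    -- kernel bound
    set P : ι → EuclideanSpace ℝ (Fin m) → EuclideanSpace ℝ (Fin m) → ℝ≥0∞ :=
      fun i z w => ENNReal.ofReal (pk m (t i) ‖z - w‖) with hP
    set c₂ : ℝ≥0∞ := 2 ^ (m + 1) * cP m with hc₂
    have hc₂top : c₂ ≠ ⊤ :=
      ENNReal.mul_ne_top (ENNReal.pow_ne_top ENNReal.ofNat_ne_top) cP_lt_top.ne
    have hbd : ∀ i j, (∫⁻ z in Q i, ∫⁻ w in Q j, ∫⁻ x, k i x z * k j x w)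
        ≤ c₂ * (∫⁻ z in Q i, ∫⁻ w in Q j, P i z w)
          + c₂ * (∫⁻ z in Q i, ∫⁻ w in Q j, P j z w) := by
      intro i j
      have hstep : ∀ z : EuclideanSpace ℝ (Fin m), (∫⁻ w in Q j, ∫⁻ x, k i x z * k j x w)
          ≤ c₂ * (∫⁻ w in Q j, P i z w) + c₂ * (∫⁻ w in Q j, P j z w) := by
        intro z
        calc (∫⁻ w in Q j, ∫⁻ x, k i x z * k j x w)
            ≤ ∫⁻ w in Q j, (c₂ * P i z w + c₂ * P j z w) := by
              refine lintegral_mono fun w => ?_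
              refine le_trans (lintegral_pk_mul_le (ht i) (ht j) z w) ?_
              rw [← mul_add]
          _ = c₂ * (∫⁻ w in Q j, P i z w) + c₂ * (∫⁻ w in Q j, P j z w) := by
              rw [lintegral_add_left (measurable_const.fun_mul (kmeas1' (ht i) z)),
                lintegral_const_mul' _ _ hc₂top, lintegral_const_mul' _ _ hc₂top]
      calc (∫⁻ z in Q i, ∫⁻ w in Q j, ∫⁻ x, k i x z * k j x w)
          ≤ ∫⁻ z in Q i, (c₂ * (∫⁻ w in Q j, P i z w) + c₂ * (∫⁻ w in Q j, P j z w)) :=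
            lintegral_mono hstep
        _ = c₂ * (∫⁻ z in Q i, ∫⁻ w in Q j, P i z w)
            + c₂ * (∫⁻ z in Q i, ∫⁻ w in Q j, P j z w) := by
            rw [lintegral_add_left
                (measurable_const.fun_mul (kmeas_int (ht i) (Q j))),
              lintegral_const_mul' _ _ hc₂top, lintegral_const_mul' _ _ hc₂top]
    -- the two double sums
    have hT1 : (∑' i, ∑' j, ∫⁻ z in Q i, ∫⁻ w in Q j, P i z w) ≤ cP m * V := by
      calc (∑' i, ∑' j, ∫⁻ z in Q i, ∫⁻ w in Q j, P i z w)
          = ∑' i, ∫⁻ z in Q i, ∑' j, ∫⁻ w in Q j, P i z w := by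
            refine tsum_congr fun i => ?_
            exact (lintegral_tsum fun j => (kmeas_int (ht i) (Q j)).aemeasurable).symm
        _ ≤ ∑' i, ∫⁻ z in Q i, cP m :=
            ENNReal.tsum_le_tsum fun i => lintegral_mono fun z => hcov1 (t i) (ht i) z
        _ = ∑' i, cP m * volume (Q i) := tsum_congr fun i => setLIntegral_const (Q i) (cP m)
        _ = cP m * V := ENNReal.tsum_mul_left
    have hT2 : (∑' i, ∑' j, ∫⁻ z in Q i, ∫⁻ w in Q j, P j z w) ≤ cP m * V := by
      rw [ENNReal.tsum_comm]
      calc (∑' j, ∑' i, ∫⁻ z in Q i, ∫⁻ w in Q j, P j z w)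
          = ∑' j, ∑' i, ∫⁻ w in Q j, ∫⁻ z in Q i, P j z w := by
            refine tsum_congr fun j => tsum_congr fun i => ?_
            exact lintegral_lintegral_swap (kmeas (ht j)).aemeasurable
        _ = ∑' j, ∫⁻ w in Q j, ∑' i, ∫⁻ z in Q i, P j z w := by
            refine tsum_congr fun j => ?_
            exact (lintegral_tsum fun i => (kmeas_int' (ht j) (Q i)).aemeasurable).symm
        _ ≤ ∑' j, ∫⁻ w in Q j, cP m :=
            ENNReal.tsum_le_tsum fun j => lintegral_mono fun w => hcov2 (t j) (ht j) w
        _ = ∑' j, cP m * volume (Q j) := tsum_congr fun j => setLIntegral_const (Q j) (cP m)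
        _ = cP m * V := ENNReal.tsum_mul_left
    calc ∫⁻ x, (∑' i, A i x) ^ 2
        = ∑' i, ∑' j, ∫⁻ x, A i x * A j x := h2
      _ = ∑' i, ∑' j, ∫⁻ z in Q i, ∫⁻ w in Q j, ∫⁻ x, k i x z * k j x w :=
          tsum_congr fun i => tsum_congr fun j => hAA i j
      _ ≤ ∑' i, ∑' j, (c₂ * (∫⁻ z in Q i, ∫⁻ w in Q j, P i z w)
            + c₂ * (∫⁻ z in Q i, ∫⁻ w in Q j, P j z w)) :=
          ENNReal.tsum_le_tsum fun i => ENNReal.tsum_le_tsum fun j => hbd i j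
      _ = c₂ * (∑' i, ∑' j, ∫⁻ z in Q i, ∫⁻ w in Q j, P i z w)
            + c₂ * (∑' i, ∑' j, ∫⁻ z in Q i, ∫⁻ w in Q j, P j z w) := by
          simp_rw [ENNReal.tsum_add, ENNReal.tsum_mul_left]
      _ ≤ c₂ * (cP m * V) + c₂ * (cP m * V) :=
          add_le_add (mul_le_mul_right hT1 c₂) (mul_le_mul_right hT2 c₂)
      _ = C₀ * V := by rw [hc₂, hC₀def]; ring
  -- conclusion
  have hC : C₀ ^ (1/2:ℝ) ≤
      ENNReal.ofReal (((2:ℝ) ^ (m + 2) * (cP m).toReal ^ 2) ^ (1/2 : ℝ) + 1) := by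
    have h1 : C₀ ^ (1/2:ℝ) ≠ ⊤ := ENNReal.rpow_ne_top_of_nonneg (by norm_num) hC₀top
    rw [← ENNReal.ofReal_toReal h1]
    apply ENNReal.ofReal_le_ofReal
    have h2 : (C₀ ^ (1/2:ℝ)).toReal = C₀.toReal ^ (1/2:ℝ) := by
      rw [← ENNReal.toReal_rpow]
    have h3 : C₀.toReal = (2:ℝ) ^ (m + 2) * (cP m).toReal ^ 2 := by
      rw [hC₀def, ENNReal.toReal_mul, ENNReal.toReal_pow, ENNReal.toReal_pow,
        ENNReal.toReal_ofNat]
    rw [h2, h3]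
    linarith
  rw [eLpNorm_eq_lintegral_rpow_enorm_toReal (by norm_num) (by norm_num)]
  simp only [ENNReal.toReal_ofNat]
  have hfinal : (∫⁻ x : EuclideanSpace ℝ (Fin m),
      (‖(∑' i, ∫ z in Q i, t i / (t i + ‖x - z‖) ^ (m + 1))‖₊ : ℝ≥0∞) ^ (2:ℝ)) ≤ C₀ * V := by
    refine le_trans (lintegral_mono fun x => ?_) hG2
    calc ((‖(∑' i, ∫ z in Q i, t i / (t i + ‖x - z‖) ^ (m + 1))‖₊ : ℝ≥0∞)) ^ (2:ℝ)
        ≤ (∑' i, A i x) ^ (2:ℝ) := ENNReal.rpow_le_rpow (hpt x) (by norm_num)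
      _ = (∑' i, A i x) ^ 2 := by
          rw [show ((2:ℝ)) = ((2:ℕ):ℝ) by norm_num, ENNReal.rpow_natCast]
  calc (∫⁻ x : EuclideanSpace ℝ (Fin m),
      (‖(∑' i, ∫ z in Q i, t i / (t i + ‖x - z‖) ^ (m + 1))‖₊ : ℝ≥0∞) ^ (2:ℝ)) ^ (1/2:ℝ)
      ≤ (C₀ * V) ^ (1/2:ℝ) := ENNReal.rpow_le_rpow hfinal (by norm_num)
    _ = C₀ ^ (1/2:ℝ) * V ^ (1/2:ℝ) := ENNReal.mul_rpow_of_nonneg _ _ (by norm_num)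
    _ ≤ ENNReal.ofReal (((2:ℝ) ^ (m + 2) * (cP m).toReal ^ 2) ^ (1/2 : ℝ) + 1) * V ^ (1/2:ℝ) :=
        mul_le_mul_left hC _
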